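/- arXiv:1511.03769 — 4 statements merged into one kernel-verified Lean document; each statement's English description precedes it below -/
import Mathlib

section
/- Under the hypotheses that f ∈ L^∞ ∩ L^1(Ω×ℝ^d) with f ≥ 0, ∫ f = 1, ∇_v f ∈ W^{1,p}_{loc} for all 1 ≤ p ≤ ∞ and Λ := sup_p M_p/p < ∞, one has for N ≥ 2 the large-k bound: Σ_{k=⌊N/3⌋+1}^{∞} (1/(2k)!) ∫_{(Ω×ℝ^d)^N} |R_N|^{2k} f̄_N dZ ≤ Σ_{k=⌊N/3⌋+1}^{∞} ( 5e² ‖K‖_{L^∞} Λ )^{2k}. -/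
open MeasureTheory
open scoped InnerProductSpace ENNReal

/-- The domain `Ω = ℝ^d` for positions (and `ℝ^d` for velocities). -/
abbrev Edim (d : ℕ) := EuclideanSpace ℝ (Fin d)

/-- The one-particle phase space `Ω × ℝ^d`. -/
abbrev Phase (d : ℕ) := Edim d × Edim d

/-- `∇_v log f`, the gradient in the velocity variable of `log f`. -/
noncomputable def gradLogV {d : ℕ} (f : Phase d → ℝ) (z : Phase d) : Edim d :=
  gradient (fun w => Real.log (f (z.1, w))) z.2

/-- `∇_v f`, the gradient in the velocity variable of `f`. -/
noncomputable def gradV {d : ℕ} (f : Phase d → ℝ) (z : Phase d) : Edim d :=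
  gradient (fun w => f (z.1, w)) z.2

/-- The convolution `K ⋆ ρ (x) = ∫ K(x−y) ρ(y) dy` where `ρ(y) = ∫ f(y,w) dw` is the
macroscopic density of `f`. -/
noncomputable def Kconv {d : ℕ} (K : Edim d → Edim d) (f : Phase d → ℝ) (x : Edim d) :
    Edim d :=
  ∫ z : Phase d, f z • K (x - z.1)

/-- `R_N(Z) = (1/N) Σ_{i,j} ∇_{v_i} log f(x_i,v_i) · (K(x_i−x_j) − K⋆ρ(x_i))`. -/
noncomputable def RN {d : ℕ} (N : ℕ) (K : Edim d → Edim d) (f : Phase d → ℝ)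
    (Z : Fin N → Phase d) : ℝ :=
  (N : ℝ)⁻¹ * ∑ i, ∑ j,
    ⟪gradLogV f (Z i), K ((Z i).1 - (Z j).1) - Kconv K f ((Z i).1)⟫_ℝ

/-- The tensor product `f̄_N(Z) = ∏_{i=1}^N f(x_i, v_i)`. -/
noncomputable def fbar {d : ℕ} (N : ℕ) (f : Phase d → ℝ) (Z : Fin N → Phase d) : ℝ :=
  ∏ i, f (Z i)

lemma aux_pow_le_factorial_mul_exp {x : ℝ} (hx : 0 ≤ x) (n : ℕ) :
    x ^ n ≤ (n.factorial : ℝ) * Real.exp x := by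
  have h1 : x ^ n / n.factorial ≤ Real.exp x :=
    le_trans (Finset.single_le_sum (f := fun i => x ^ i / i.factorial)
      (fun i _ => by positivity) (Finset.self_mem_range_succ n))
      (Real.sum_le_exp_of_nonneg hx (n + 1))
  rw [div_le_iff₀ (by positivity : (0:ℝ) < n.factorial)] at h1
  linarith

lemma aux_pow_self_le (q : ℕ) : (q : ℝ) ^ q ≤ (q.factorial : ℝ) * Real.exp 1 ^ q := by
  calc (q:ℝ)^q ≤ q.factorial * Real.exp q :=
        aux_pow_le_factorial_mul_exp (Nat.cast_nonneg q) q
    _ = q.factorial * Real.exp 1 ^ q := by rw [← Real.exp_nat_mul, mul_one]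

lemma aux_exp_tsum (x : ℝ) : Real.exp x = ∑' n : ℕ, x ^ n / n.factorial := by
  rw [Real.exp_eq_exp_ℝ, NormedSpace.exp_eq_tsum_div]

lemma aux_lintegral_prod_le {α β : Type*} [MeasurableSpace α] [MeasurableSpace β]
    (μ : Measure α) (ν : Measure β) [SigmaFinite ν] (h : α × β → ℝ≥0∞) :
    ∫⁻ p, h p ∂(μ.prod ν) ≤ ∫⁻ x, ∫⁻ y, h (x, y) ∂ν ∂μ := by
  obtain ⟨g, gmeas, gle, geq⟩ := exists_measurable_le_lintegral_eq (μ.prod ν) h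
  rw [geq, lintegral_prod g gmeas.aemeasurable]
  exact lintegral_mono fun x => lintegral_mono fun y => gle (x, y)

lemma aux_lintegral_pi_prod_le {α : Type*} [MeasureSpace α]
    [SigmaFinite (volume : Measure α)]
    (G : α → ℝ≥0∞) (hG : ∀ x, G x ≠ ∞) (J : ℝ≥0∞) (hJ : ∫⁻ x, G x ≤ J) (hJtop : J ≠ ∞) :
    ∀ n : ℕ, (∫⁻ Z : Fin n → α, ∏ i, G (Z i)) ≤ J ^ n := by
  intro n
  induction n with
  | zero =>
      simp [volume_pi, Measure.pi_univ]
  | succ n ih =>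
      have MP := (measurePreserving_piFinSuccAbove (fun _ : Fin (n+1) => (volume : Measure α)) 0).symm
      have key : (∫⁻ Z : Fin (n+1) → α, ∏ i, G (Z i))
          = ∫⁻ p : α × (Fin n → α), G p.1 * ∏ i, G (p.2 i)
              ∂((volume : Measure α).prod (volume : Measure (Fin n → α))) := by
        rw [volume_pi, ← MP.lintegral_comp_emb (MeasurableEquiv.measurableEmbedding _)]
        rw [show (volume : Measure (Fin n → α)) = Measure.pi (fun _ => volume) from volume_pi]
        congr 1
        funext p
        simp only [MeasurableEquiv.piFinSuccAbove_symm_apply, Fin.insertNthEquiv,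
          Equiv.coe_fn_mk, Fin.insertNth_zero, Fin.prod_univ_succ, Fin.cons_zero, Fin.cons_succ, cast_eq]
      rw [key]
      calc _ ≤ ∫⁻ x : α, ∫⁻ Y : Fin n → α, G x * ∏ i, G (Y i) :=
            aux_lintegral_prod_le _ _ _
        _ = ∫⁻ x : α, G x * ∫⁻ Y : Fin n → α, ∏ i, G (Y i) := by
            congr 1; funext x; exact lintegral_const_mul' _ _ (hG x)
        _ ≤ ∫⁻ x : α, G x * J ^ n :=
            lintegral_mono fun x => mul_le_mul_right ih _
        _ = (∫⁻ x : α, G x) * J ^ n := lintegral_mul_const' _ _ (ENNReal.pow_ne_top hJtop)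
        _ ≤ J * J ^ n := mul_le_mul_left hJ _
        _ = J ^ (n + 1) := by rw [pow_succ, mul_comm]

lemma single_particle {d : ℕ} (f : Phase d → ℝ) (hfpos : ∀ z, 0 ≤ f z)
    (hfint : Integrable f) (hfmass : ∫ z : Phase d, f z = 1)
    (Λ : ℝ) (hΛ0 : 0 ≤ Λ)
    (hΛ : ∀ q : ℕ, 1 ≤ q →
      (∫⁻ z : Phase d, ENNReal.ofReal (‖gradLogV f z‖ ^ q * f z)) ^ (1 / (q : ℝ)) ≤
        ENNReal.ofReal (Λ * q))
    (t : ℝ) (ht : 0 < t) (htΛ : t * Λ * Real.exp 1 ≤ 1 / 2) :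
    (∫⁻ z : Phase d, ENNReal.ofReal (Real.exp (t * ‖gradLogV f z‖) * f z)) ≤ 2 := by
  set a : Phase d → ℝ := fun z => ‖gradLogV f z‖ with ha
  obtain ⟨g, gmeas, gle, geq⟩ :=
    exists_measurable_le_lintegral_eq (volume : Measure (Phase d))
      (fun z => ENNReal.ofReal (Real.exp (t * a z) * f z))
  set b : Phase d → ℝ := fun z => max 0 (Real.log ((g z).toReal / f z) / t) with hb
  have hb0 : ∀ z, 0 ≤ b z := fun z => le_max_left _ _
  have hgtop : ∀ z, g z ≠ ∞ := fun z => (lt_of_le_of_lt (gle z) ENNReal.ofReal_lt_top).ne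
  have hrle : ∀ z, (g z).toReal ≤ Real.exp (t * a z) * f z := fun z =>
    ENNReal.toReal_le_of_le_ofReal (mul_nonneg (Real.exp_pos _).le (hfpos z)) (gle z)
  have hble : ∀ z, b z ≤ a z := by
    intro z
    have ha0 : 0 ≤ a z := norm_nonneg _
    refine max_le ha0 ?_
    rw [div_le_iff₀ ht]
    rcases eq_or_lt_of_le (div_nonneg ENNReal.toReal_nonneg (hfpos z)) with h0 | h0
    · rw [← h0, Real.log_zero]; exact mul_nonneg ha0 ht.le
    · have hfz : 0 < f z := by
        rcases eq_or_lt_of_le (hfpos z) with hf | hf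
        · exfalso; rw [← hf, div_zero] at h0; exact lt_irrefl _ h0
        · exact hf
      rw [Real.log_le_iff_le_exp h0, div_le_iff₀ hfz, mul_comm (a z) t]
      exact hrle z
  have hgle2 : ∀ z, g z ≤ ENNReal.ofReal (Real.exp (t * b z) * f z) := by
    intro z
    rcases eq_or_lt_of_le (hfpos z) with hf0 | hf0
    · have hg0 : g z = 0 := le_antisymm (by simpa [← hf0] using gle z) zero_le
      simp [hg0]
    · rw [← ENNReal.ofReal_toReal (hgtop z)]
      apply ENNReal.ofReal_le_ofReal
      rcases le_or_gt ((g z).toReal) (f z) with hrf | hrf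
      · calc (g z).toReal ≤ f z := hrf
          _ ≤ Real.exp (t * b z) * f z :=
            le_mul_of_one_le_left (hfpos z) (Real.one_le_exp (mul_nonneg ht.le (hb0 z)))
      · have hrpos : 0 < (g z).toReal := lt_trans hf0 hrf
        have hx : 0 < (g z).toReal / f z := div_pos hrpos hf0
        have h1 : Real.log ((g z).toReal / f z) / t ≤ b z := le_max_right _ _
        have h2 : Real.log ((g z).toReal / f z) ≤ t * b z := by
          rw [div_le_iff₀ ht, mul_comm] at h1; exact h1
        have h3 : (g z).toReal / f z ≤ Real.exp (t * b z) := by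
          rw [← Real.exp_log hx]; exact Real.exp_le_exp.2 h2
        calc (g z).toReal = (g z).toReal / f z * f z := by field_simp
          _ ≤ Real.exp (t * b z) * f z := mul_le_mul_of_nonneg_right h3 (hfpos z)
  have hfm : AEMeasurable f (volume : Measure (Phase d)) := hfint.aemeasurable
  have hbm : AEMeasurable b (volume : Measure (Phase d)) := by
    apply AEMeasurable.max aemeasurable_const
    exact (Real.measurable_log.comp_aemeasurable
      ((gmeas.ennreal_toReal.aemeasurable).div hfm)).div_const t
  have expand : ∀ z, ENNReal.ofReal (Real.exp (t * b z) * f z)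
      = ∑' q : ℕ, ENNReal.ofReal ((t * b z) ^ q / q.factorial * f z) := by
    intro z
    rw [aux_exp_tsum (t * b z), ← tsum_mul_right,
      ENNReal.ofReal_tsum_of_nonneg (fun q => mul_nonneg (div_nonneg
        (pow_nonneg (mul_nonneg ht.le (hb0 z)) q) (Nat.cast_nonneg _)) (hfpos z))
        ((Real.summable_pow_div_factorial (t * b z)).mul_right (f z))]
  have perq : ∀ q : ℕ, (∫⁻ z : Phase d, ENNReal.ofReal ((t * b z) ^ q / q.factorial * f z))
      ≤ ENNReal.ofReal ((t * Λ * Real.exp 1) ^ q) := by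
    intro q
    have hcoef : (0:ℝ) ≤ t ^ q / (q.factorial : ℝ) := by positivity
    have step1 : ∀ z, ENNReal.ofReal ((t * b z) ^ q / q.factorial * f z)
        = ENNReal.ofReal (t ^ q / q.factorial) * ENNReal.ofReal (b z ^ q * f z) := by
      intro z; rw [← ENNReal.ofReal_mul hcoef]; congr 1; rw [mul_pow]; ring
    rw [lintegral_congr step1, lintegral_const_mul' _ _ ENNReal.ofReal_ne_top]
    have mono1 : (∫⁻ z : Phase d, ENNReal.ofReal (b z ^ q * f z))
        ≤ ∫⁻ z : Phase d, ENNReal.ofReal (a z ^ q * f z) :=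
      lintegral_mono fun z => ENNReal.ofReal_le_ofReal
        (mul_le_mul_of_nonneg_right (pow_le_pow_left₀ (hb0 z) (hble z) q) (hfpos z))
    have momq : (∫⁻ z : Phase d, ENNReal.ofReal (a z ^ q * f z))
        ≤ ENNReal.ofReal ((Λ * q) ^ q) := by
      rcases Nat.eq_zero_or_pos q with hq0 | hq1
      · subst hq0
        simp only [pow_zero, one_mul]
        rw [← ofReal_integral_eq_lintegral_ofReal hfint (Filter.Eventually.of_forall hfpos),
          hfmass]
      · have h := hΛ q hq1
        have hq0' : (q:ℝ) ≠ 0 := Nat.cast_ne_zero.2 (Nat.pos_iff_ne_zero.1 hq1)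
        have hq0'' : (0:ℝ) < (q:ℝ) := Nat.cast_pos.2 hq1
        have h2 := ENNReal.rpow_le_rpow h hq0''.le
        rw [← ENNReal.rpow_mul, one_div, inv_mul_cancel₀ hq0', ENNReal.rpow_one,
          ENNReal.rpow_natCast] at h2
        calc (∫⁻ z : Phase d, ENNReal.ofReal (a z ^ q * f z))
            ≤ ENNReal.ofReal (Λ * q) ^ q := h2
          _ = ENNReal.ofReal ((Λ * q) ^ q) :=
              (ENNReal.ofReal_pow (mul_nonneg hΛ0 (Nat.cast_nonneg q)) q).symm
    calc ENNReal.ofReal (t ^ q / ↑q.factorial) * ∫⁻ z : Phase d, ENNReal.ofReal (b z ^ q * f z)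
        ≤ ENNReal.ofReal (t ^ q / ↑q.factorial) * ENNReal.ofReal ((Λ * q) ^ q) :=
          mul_le_mul_right (mono1.trans momq) _
      _ = ENNReal.ofReal (t ^ q / ↑q.factorial * (Λ * q) ^ q) :=
          (ENNReal.ofReal_mul hcoef).symm
      _ ≤ ENNReal.ofReal ((t * Λ * Real.exp 1) ^ q) := by
          apply ENNReal.ofReal_le_ofReal
          have h2 : (q:ℝ)^q / q.factorial ≤ Real.exp 1 ^ q := by
            rw [div_le_iff₀ (by positivity : (0:ℝ) < q.factorial), mul_comm]
            exact aux_pow_self_le q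
          have h3 : t ^ q / ↑q.factorial * (Λ * q) ^ q
              = (t*Λ)^q * ((q:ℝ)^q / q.factorial) := by
            rw [mul_pow]; ring
          rw [h3, mul_pow (t*Λ)]
          exact mul_le_mul_of_nonneg_left h2 (pow_nonneg (mul_nonneg ht.le hΛ0) q)
  calc (∫⁻ z : Phase d, ENNReal.ofReal (Real.exp (t * a z) * f z)) = ∫⁻ z, g z := geq
    _ ≤ ∫⁻ z : Phase d, ENNReal.ofReal (Real.exp (t * b z) * f z) := lintegral_mono hgle2
    _ = ∑' q : ℕ, ∫⁻ z : Phase d, ENNReal.ofReal ((t * b z) ^ q / q.factorial * f z) := by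
        rw [lintegral_congr expand]
        exact lintegral_tsum fun q =>
          ((((hbm.const_mul t).pow_const q).div_const _).mul hfm).ennreal_ofReal
    _ ≤ ∑' q : ℕ, ENNReal.ofReal ((t * Λ * Real.exp 1) ^ q) := ENNReal.tsum_le_tsum perq
    _ = ∑' q : ℕ, (ENNReal.ofReal (t * Λ * Real.exp 1)) ^ q := by
        congr 1; funext q; exact ENNReal.ofReal_pow (mul_nonneg (mul_nonneg ht.le hΛ0) (Real.exp_pos 1).le) q
    _ = (1 - ENNReal.ofReal (t * Λ * Real.exp 1))⁻¹ := ENNReal.tsum_geometric _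
    _ ≤ 2 := by
        have hr : ENNReal.ofReal (t * Λ * Real.exp 1) ≤ 2⁻¹ := by
          calc ENNReal.ofReal (t * Λ * Real.exp 1) ≤ ENNReal.ofReal (1/2) :=
                ENNReal.ofReal_le_ofReal htΛ
            _ = 2⁻¹ := by
                rw [one_div, ENNReal.ofReal_inv_of_pos two_pos, ENNReal.ofReal_ofNat]
        have h12 : (2:ℝ≥0∞)⁻¹ ≤ 1 - ENNReal.ofReal (t * Λ * Real.exp 1) := by
          have := tsub_le_tsub_left hr (1:ℝ≥0∞)
          rwa [ENNReal.one_sub_inv_two] at this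
        calc (1 - ENNReal.ofReal (t * Λ * Real.exp 1))⁻¹ ≤ (2⁻¹:ℝ≥0∞)⁻¹ :=
              ENNReal.inv_le_inv' h12
          _ = 2 := by rw [inv_inv]

section KR
variable {d : ℕ}

lemma Kconv_bound (K : Edim d → Edim d) (f : Phase d → ℝ) (CK : ℝ)
    (hK : ∀ x, ‖K x‖ ≤ CK) (hfpos : ∀ z, 0 ≤ f z) (hfint : Integrable f)
    (hfmass : ∫ z : Phase d, f z = 1) (x : Edim d) : ‖Kconv K f x‖ ≤ CK := by
  calc ‖Kconv K f x‖ ≤ ∫ z : Phase d, ‖f z • K (x - z.1)‖ :=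
        norm_integral_le_integral_norm _
    _ ≤ ∫ z : Phase d, CK * f z := by
        apply integral_mono_of_nonneg (Filter.Eventually.of_forall fun z => norm_nonneg _)
          (hfint.const_mul CK)
        apply Filter.Eventually.of_forall
        intro z
        show ‖f z • K (x - z.1)‖ ≤ CK * f z
        rw [norm_smul, Real.norm_of_nonneg (hfpos z), mul_comm CK (f z)]
        exact mul_le_mul_of_nonneg_left (hK _) (hfpos z)
    _ = CK := by rw [integral_const_mul, hfmass, mul_one]

lemma RN_bound (N : ℕ) (hN : 2 ≤ N) (K : Edim d → Edim d) (f : Phase d → ℝ) (CK : ℝ)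
    (hK : ∀ x, ‖K x‖ ≤ CK) (hfpos : ∀ z, 0 ≤ f z) (hfint : Integrable f)
    (hfmass : ∫ z : Phase d, f z = 1) (Z : Fin N → Phase d) :
    |RN N K f Z| ≤ 2 * CK * ∑ i, ‖gradLogV f (Z i)‖ := by
  have hNcast : (0:ℝ) < (N:ℝ) := Nat.cast_pos.2 (by omega)
  rw [RN, abs_mul, abs_inv, Nat.abs_cast]
  have hsum : |∑ i, ∑ j, ⟪gradLogV f (Z i), K ((Z i).1 - (Z j).1) - Kconv K f ((Z i).1)⟫_ℝ|
      ≤ ∑ i, ∑ j : Fin N, ‖gradLogV f (Z i)‖ * (2 * CK) := by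
    refine (Finset.abs_sum_le_sum_abs _ _).trans (Finset.sum_le_sum fun i _ => ?_)
    refine (Finset.abs_sum_le_sum_abs _ _).trans (Finset.sum_le_sum fun j _ => ?_)
    calc |⟪gradLogV f (Z i), K ((Z i).1 - (Z j).1) - Kconv K f ((Z i).1)⟫_ℝ|
        ≤ ‖gradLogV f (Z i)‖ * ‖K ((Z i).1 - (Z j).1) - Kconv K f ((Z i).1)‖ :=
          abs_real_inner_le_norm _ _
      _ ≤ ‖gradLogV f (Z i)‖ * (2 * CK) := by
          apply mul_le_mul_of_nonneg_left _ (norm_nonneg _)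
          calc ‖K ((Z i).1 - (Z j).1) - Kconv K f ((Z i).1)‖
              ≤ ‖K ((Z i).1 - (Z j).1)‖ + ‖Kconv K f ((Z i).1)‖ := norm_sub_le _ _
            _ ≤ CK + CK := add_le_add (hK _)
                (Kconv_bound K f CK hK hfpos hfint hfmass _)
            _ = 2 * CK := by ring
  calc (N:ℝ)⁻¹ * |∑ i, ∑ j, ⟪gradLogV f (Z i), K ((Z i).1 - (Z j).1) - Kconv K f ((Z i).1)⟫_ℝ|
      ≤ (N:ℝ)⁻¹ * ∑ i, ∑ j : Fin N, ‖gradLogV f (Z i)‖ * (2 * CK) :=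
        mul_le_mul_of_nonneg_left hsum (inv_nonneg.2 hNcast.le)
    _ = (N:ℝ)⁻¹ * ∑ i, (N:ℝ) * (‖gradLogV f (Z i)‖ * (2 * CK)) := by
        simp [Finset.sum_const]
    _ = 2 * CK * ∑ i, ‖gradLogV f (Z i)‖ := by
        rw [← Finset.mul_sum, ← mul_assoc, inv_mul_cancel₀ (ne_of_gt hNcast), one_mul,
          ← Finset.sum_mul]
        ring

end KR

lemma main_bound {d : ℕ} (N : ℕ) (hN : 2 ≤ N) (K : Edim d → Edim d) (f : Phase d → ℝ)
    (CK : ℝ) (hK : ∀ x, ‖K x‖ ≤ CK)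
    (hfpos : ∀ z, 0 ≤ f z) (hfint : Integrable f)
    (hfmass : ∫ z : Phase d, f z = 1)
    (Λ : ℝ) (hΛ0 : 0 ≤ Λ)
    (hΛ : ∀ q : ℕ, 1 ≤ q →
      (∫⁻ z : Phase d, ENNReal.ofReal (‖gradLogV f z‖ ^ q * f z)) ^ (1 / (q : ℝ)) ≤
        ENNReal.ofReal (Λ * q))
    (t : ℝ) (ht : 0 < t) (htΛ : t * Λ * Real.exp 1 ≤ 1 / 2) (k : ℕ) :
    ((2 * k).factorial : ℝ≥0∞)⁻¹ *
        (∫⁻ Z : Fin N → Phase d, ENNReal.ofReal (|RN N K f Z| ^ (2 * k) * fbar N f Z))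
      ≤ ENNReal.ofReal ((2 * CK / t) ^ (2 * k)) * 2 ^ N := by
  have hCK0 : 0 ≤ CK := le_trans (norm_nonneg _) (hK 0)
  set C : ℝ := ((2*k).factorial : ℝ) * (2 * CK / t) ^ (2*k) with hC
  have hC0 : 0 ≤ C := by positivity
  have hpt : ∀ Z : Fin N → Phase d, |RN N K f Z| ^ (2*k) * fbar N f Z
      ≤ C * ∏ i, (Real.exp (t * ‖gradLogV f (Z i)‖) * f (Z i)) := by
    intro Z
    set S := ∑ i, ‖gradLogV f (Z i)‖ with hS
    have hS0 : 0 ≤ S := Finset.sum_nonneg fun i _ => norm_nonneg _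
    have h1 : |RN N K f Z| ^ (2*k) ≤ (2*CK*S) ^ (2*k) :=
      pow_le_pow_left₀ (abs_nonneg _) (RN_bound N hN K f CK hK hfpos hfint hfmass Z) _
    have h2 : (2*CK*S) ^ (2*k) = (2*CK/t) ^ (2*k) * (t*S) ^ (2*k) := by
      rw [← mul_pow]; congr 1; field_simp
    have h3 : (t*S) ^ (2*k) ≤ ((2*k).factorial : ℝ) * Real.exp (t*S) :=
      aux_pow_le_factorial_mul_exp (mul_nonneg ht.le hS0) _
    have h4 : Real.exp (t*S) = ∏ i, Real.exp (t * ‖gradLogV f (Z i)‖) := by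
      rw [hS, Finset.mul_sum, Real.exp_sum]
    have hfb0 : 0 ≤ fbar N f Z := Finset.prod_nonneg fun i _ => hfpos _
    calc |RN N K f Z| ^ (2*k) * fbar N f Z
        ≤ ((2*CK/t) ^ (2*k) * (((2*k).factorial : ℝ) * Real.exp (t*S))) * fbar N f Z := by
          apply mul_le_mul_of_nonneg_right _ hfb0
          calc |RN N K f Z| ^ (2*k) ≤ (2*CK/t)^(2*k) * (t*S)^(2*k) := by
                rw [← h2]; exact h1
            _ ≤ (2*CK/t)^(2*k) * (((2*k).factorial : ℝ) * Real.exp (t*S)) :=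
              mul_le_mul_of_nonneg_left h3 (by positivity)
      _ = C * ∏ i, (Real.exp (t * ‖gradLogV f (Z i)‖) * f (Z i)) := by
          rw [h4, hC, Finset.prod_mul_distrib]
          show (2*CK/t) ^ (2*k) * (((2*k).factorial : ℝ) *
              ∏ i, Real.exp (t * ‖gradLogV f (Z i)‖)) * (∏ i, f (Z i))
            = ((2*k).factorial : ℝ) * (2 * CK / t) ^ (2*k) *
              ((∏ i, Real.exp (t * ‖gradLogV f (Z i)‖)) * ∏ i, f (Z i))
          ring
  set G : Phase d → ℝ≥0∞ :=
    fun z => ENNReal.ofReal (Real.exp (t * ‖gradLogV f z‖) * f z) with hG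
  have hGtop : ∀ z, G z ≠ ∞ := fun z => ENNReal.ofReal_ne_top
  have hGJ : (∫⁻ z : Phase d, G z) ≤ 2 :=
    single_particle f hfpos hfint hfmass Λ hΛ0 hΛ t ht htΛ
  have hint : (∫⁻ Z : Fin N → Phase d, ENNReal.ofReal (|RN N K f Z| ^ (2*k) * fbar N f Z))
      ≤ ENNReal.ofReal C * 2 ^ N := by
    calc (∫⁻ Z : Fin N → Phase d, ENNReal.ofReal (|RN N K f Z| ^ (2*k) * fbar N f Z))
        ≤ ∫⁻ Z : Fin N → Phase d,
            ENNReal.ofReal (C * ∏ i, (Real.exp (t * ‖gradLogV f (Z i)‖) * f (Z i))) :=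
          lintegral_mono fun Z => ENNReal.ofReal_le_ofReal (hpt Z)
      _ = ENNReal.ofReal C * ∫⁻ Z : Fin N → Phase d, ∏ i, G (Z i) := by
          rw [← lintegral_const_mul' _ _ ENNReal.ofReal_ne_top]
          apply lintegral_congr
          intro Z
          rw [ENNReal.ofReal_mul hC0,
            ENNReal.ofReal_prod_of_nonneg
              (fun i _ => mul_nonneg (Real.exp_pos _).le (hfpos _))]
      _ ≤ ENNReal.ofReal C * 2 ^ N :=
          mul_le_mul_right
            (aux_lintegral_pi_prod_le G hGtop 2 hGJ ENNReal.ofNat_ne_top N) _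
  calc ((2*k).factorial : ℝ≥0∞)⁻¹ *
        (∫⁻ Z : Fin N → Phase d, ENNReal.ofReal (|RN N K f Z| ^ (2*k) * fbar N f Z))
      ≤ ((2*k).factorial : ℝ≥0∞)⁻¹ * (ENNReal.ofReal C * 2^N) := mul_le_mul_right hint _
    _ = ENNReal.ofReal ((2*CK/t)^(2*k)) * 2^N := by
        rw [hC, ENNReal.ofReal_mul (Nat.cast_nonneg _), ENNReal.ofReal_natCast,
          ← mul_assoc, ← mul_assoc,
          ENNReal.inv_mul_cancel (Nat.cast_ne_zero.2 (Nat.factorial_ne_zero _))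
            (ENNReal.natCast_ne_top _), one_mul]

/-- **Large-`k` bound (Proposition 3.2 of the paper).**  Under the assumptions
`f ∈ L^∞ ∩ L^1`, `f ≥ 0`, `∫ f = 1`, `∇_v f ∈ W^{1,p}_loc` for every `1 ≤ p ≤ ∞`,
and `Λ := sup_p M_p/p < ∞` (expressed by `(∫ |∇_v log f|^q f)^{1/q} ≤ Λ q`),
one has for `N ≥ 2`
`Σ_{k=⌊N/3⌋+1}^∞ (1/(2k)!) ∫ |R_N|^{2k} f̄_N dZ
  ≤ Σ_{k=⌊N/3⌋+1}^∞ (5e² ‖K‖_{L^∞} Λ)^{2k}`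
(the sums are indexed by `k = N/3 + 1 + m`, `m ∈ ℕ`). -/
theorem stmt6 {d : ℕ} (N : ℕ) (hN : 2 ≤ N) (K : Edim d → Edim d) (f : Phase d → ℝ)
    (CK : ℝ) (hK : ∀ x, ‖K x‖ ≤ CK) (hK0 : K 0 = 0)
    (hfpos : ∀ z, 0 ≤ f z) (hfint : Integrable f) (hfbdd : ∃ C, ∀ z, f z ≤ C)
    (hfmass : ∫ z : Phase d, f z = 1)
    (hreg : ∀ q : ℕ, 1 ≤ q →
      LocallyIntegrable (fun z => ‖gradV f z‖ ^ q) volume ∧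
      LocallyIntegrable (fun z => ‖fderiv ℝ (gradV f) z‖ ^ q) volume)
    (Λ : ℝ) (hΛ0 : 0 ≤ Λ)
    (hΛ : ∀ q : ℕ, 1 ≤ q →
      (∫⁻ z : Phase d, ENNReal.ofReal (‖gradLogV f z‖ ^ q * f z)) ^ (1 / (q : ℝ)) ≤
        ENNReal.ofReal (Λ * q)) :
    ∑' m : ℕ,
      (((2 * (N / 3 + 1 + m)).factorial : ℝ≥0∞))⁻¹ *
        ∫⁻ Z : Fin N → Phase d,
          ENNReal.ofReal (|RN N K f Z| ^ (2 * (N / 3 + 1 + m)) * fbar N f Z) ≤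
      ∑' m : ℕ,
        ENNReal.ofReal ((5 * Real.exp 1 ^ 2 * CK * Λ) ^ (2 * (N / 3 + 1 + m))) := by
  refine ENNReal.tsum_le_tsum fun m => ?_
  set k := N / 3 + 1 + m with hk
  have hk3 : N ≤ 3 * k := by omega
  have hCK0 : 0 ≤ CK := le_trans (norm_nonneg _) (hK 0)
  have he : (0:ℝ) < Real.exp 1 := Real.exp_pos 1
  rcases eq_or_lt_of_le hΛ0 with hΛz | hΛpos
  · -- Λ = 0
    rw [← hΛz, mul_zero, zero_pow (by omega : 2 * k ≠ 0), ENNReal.ofReal_zero]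
    have key : ∀ n : ℕ, ((2 * k).factorial : ℝ≥0∞)⁻¹ *
        (∫⁻ Z : Fin N → Phase d,
          ENNReal.ofReal (|RN N K f Z| ^ (2 * k) * fbar N f Z))
        ≤ ENNReal.ofReal ((2 * CK / ((n:ℝ)+1)) ^ (2*k)) * 2 ^ N := fun n =>
      main_bound N hN K f CK hK hfpos hfint hfmass Λ hΛ0 hΛ ((n:ℝ)+1) (by positivity)
        (by rw [← hΛz, mul_zero, zero_mul]; norm_num) k
    refine ENNReal.le_of_forall_pos_le_add fun ε hε _ => ?_
    rw [zero_add]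
    set D : ℝ := (2*CK+1) ^ (2*k) * 2 ^ N with hD
    have hεpos : (0:ℝ) < (ε:ℝ) := by exact_mod_cast hε
    obtain ⟨n, hn⟩ := exists_nat_ge (D / (ε:ℝ))
    refine (key n).trans ?_
    have hn1 : (0:ℝ) < (n:ℝ)+1 := by positivity
    have h2N : ((2:ℝ≥0∞) ^ N) = ENNReal.ofReal ((2:ℝ) ^ N) := by
      rw [ENNReal.ofReal_pow (by norm_num : (0:ℝ) ≤ 2), ENNReal.ofReal_ofNat]
    rw [h2N, ← ENNReal.ofReal_mul (by positivity)]
    rw [show (ε : ℝ≥0∞) = ENNReal.ofReal (ε:ℝ) from (ENNReal.ofReal_coe_nnreal (p := ε)).symm]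
    apply ENNReal.ofReal_le_ofReal
    have step1 : (2 * CK / ((n:ℝ)+1)) ^ (2*k) ≤ (2*CK+1) ^ (2*k) / ((n:ℝ)+1) := by
      rw [div_pow]
      exact div_le_div₀ (by positivity)
        (pow_le_pow_left₀ (by positivity) (by linarith) _) hn1
        (le_self_pow₀ (by linarith) (by omega))
    calc (2 * CK / ((n:ℝ)+1)) ^ (2*k) * 2^N
        ≤ ((2*CK+1) ^ (2*k) / ((n:ℝ)+1)) * 2^N :=
          mul_le_mul_of_nonneg_right step1 (by positivity)
      _ = D / ((n:ℝ)+1) := by rw [hD]; ring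
      _ ≤ (ε:ℝ) := by
          rw [div_le_iff₀ hn1]
          have hD' : D ≤ (n:ℝ) * ε := (div_le_iff₀ hεpos).1 hn
          nlinarith
  · -- Λ > 0
    set t : ℝ := (2 * Real.exp 1 * Λ)⁻¹ with htdef
    have ht : 0 < t := by positivity
    have htΛ : t * Λ * Real.exp 1 ≤ 1 / 2 := by
      have : t * Λ * Real.exp 1 = 1/2 := by
        rw [htdef]; field_simp
      linarith
    refine (main_bound N hN K f CK hK hfpos hfint hfmass Λ hΛ0 hΛ t ht htΛ k).trans ?_
    have h2CKt : 2 * CK / t = 4 * Real.exp 1 * CK * Λ := by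
      rw [htdef]
      field_simp
      ring
    rw [h2CKt]
    have h2N : ((2:ℝ≥0∞) ^ N) ≤ 2 ^ (3*k) := pow_le_pow_right₀ one_le_two hk3
    have h25 : (128:ℝ) ≤ 25 * Real.exp 1 ^ 2 := by nlinarith [Real.exp_one_gt_d9]
    calc ENNReal.ofReal ((4*Real.exp 1*CK*Λ) ^ (2*k)) * 2 ^ N
        ≤ ENNReal.ofReal ((4*Real.exp 1*CK*Λ) ^ (2*k)) * 2 ^ (3*k) :=
          mul_le_mul_right h2N _
      _ = ENNReal.ofReal ((4*Real.exp 1*CK*Λ) ^ (2*k) * 2 ^ (3*k)) := by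
          rw [ENNReal.ofReal_mul (by positivity),
            ENNReal.ofReal_pow (by norm_num : (0:ℝ) ≤ 2), ENNReal.ofReal_ofNat]
      _ ≤ ENNReal.ofReal ((5 * Real.exp 1 ^ 2 * CK * Λ) ^ (2*k)) := by
          apply ENNReal.ofReal_le_ofReal
          have hX0 : (0:ℝ) ≤ Real.exp 1 ^ 2 * (CK*Λ)^2 := by positivity
          have hbase : (4*Real.exp 1*CK*Λ)^2 * 2^3 ≤ (5 * Real.exp 1 ^ 2 * CK * Λ)^2 := by
            have e1 : (4*Real.exp 1*CK*Λ)^2 * 2^3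
                = 128 * (Real.exp 1 ^ 2 * (CK*Λ)^2) := by ring
            have e2 : (5 * Real.exp 1 ^ 2 * CK * Λ)^2
                = (25 * Real.exp 1 ^ 2) * (Real.exp 1 ^ 2 * (CK*Λ)^2) := by ring
            rw [e1, e2]
            exact mul_le_mul_of_nonneg_right h25 hX0
          calc (4*Real.exp 1*CK*Λ) ^ (2*k) * 2 ^ (3*k)
              = ((4*Real.exp 1*CK*Λ)^2) ^ k * ((2:ℝ)^3) ^ k := by
                rw [pow_mul, pow_mul]
            _ = ((4*Real.exp 1*CK*Λ)^2 * 2^3) ^ k := (mul_pow _ _ _).symm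
            _ ≤ ((5 * Real.exp 1 ^ 2 * CK * Λ)^2) ^ k :=
                pow_le_pow_left₀ (by positivity) hbase k
            _ = (5 * Real.exp 1 ^ 2 * CK * Λ) ^ (2*k) := (pow_mul _ 2 k).symm
end

section
/- Assume 1 ≤ p ≤ q. Then the cardinality of the effective set satisfies |ℰ_{q,p}| ≤ Σ_{l=1}^{⌊p/2⌋} C(q,l) · l^p ≤ ⌊p/2⌋ · C(q, ⌊p/2⌋) · ⌊p/2⌋^p ≤ (p/2) · e^{p/2} · q^{p/2} · (p/2)^{p/2}, where C(q,l) denotes the binomial coefficient q choose l. -/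
/-- Monotonicity of binomial coefficients below the middle. -/
lemma choose_mono_half' {q l m : ℕ} (hlm : l ≤ m) (hm : m ≤ q / 2) :
    q.choose l ≤ q.choose m := by
  induction m with
  | zero => obtain rfl : l = 0 := by omega
            rfl
  | succ k ih =>
      rcases Nat.lt_or_ge l (k+1) with h | h
      · exact (ih (by omega) (by omega)).trans
          (Nat.choose_le_succ_of_lt_half_left (by omega))
      · obtain rfl : l = k + 1 := by omega
        rfl

/-- The "effective set" `ℰ_{q,p}`: `p`-tuples `I = (i_1, …, i_p)` with entries in
`{1, …, q}` such that no value appears with multiplicity exactly one, i.e. every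
component `a_l = |{ν : i_ν = l}|` of the multiplicity function satisfies `a_l ≠ 1`. -/
def EffectiveSet (q p : ℕ) : Set (Fin p → ℕ) :=
  {I | (∀ ν, 1 ≤ I ν ∧ I ν ≤ q) ∧
    ∀ l, (Finset.univ.filter (fun ν => I ν = l)).card ≠ 1}

/-- **Bound on the cardinality of the effective set** (Lemma 3.4 of the paper).
For `1 ≤ p ≤ q`,
`|ℰ_{q,p}| ≤ Σ_{l=1}^{⌊p/2⌋} C(q,l) l^p ≤ ⌊p/2⌋ C(q,⌊p/2⌋) ⌊p/2⌋^p
  ≤ (p/2) e^{p/2} q^{p/2} (p/2)^{p/2}`. -/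
theorem stmt10 (q p : ℕ) (hp : 1 ≤ p) (hpq : p ≤ q) :
    (EffectiveSet q p).ncard ≤ ∑ l ∈ Finset.Icc 1 (p / 2), Nat.choose q l * l ^ p ∧
    (∑ l ∈ Finset.Icc 1 (p / 2), Nat.choose q l * l ^ p
      ≤ (p / 2) * Nat.choose q (p / 2) * (p / 2) ^ p) ∧
    (((p / 2 * Nat.choose q (p / 2) * (p / 2) ^ p : ℕ) : ℝ) ≤
      ((p : ℝ) / 2) * Real.exp ((p : ℝ) / 2) * (q : ℝ) ^ ((p : ℝ) / 2) *
        ((p : ℝ) / 2) ^ ((p : ℝ) / 2)) := by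
  classical
  set m := p / 2 with hm
  refine ⟨?_, ?_, ?_⟩
  · -- Part 1
    set F : Finset (Fin p → ℕ) :=
      (Finset.Icc 1 m).biUnion (fun l =>
        ((Finset.Icc 1 q).powersetCard l).biUnion (fun S =>
          Fintype.piFinset (fun _ : Fin p => S))) with hF
    have hsub : EffectiveSet q p ⊆ ↑F := by
      intro I hI
      obtain ⟨h1, h2⟩ := hI
      set S := Finset.image I Finset.univ with hS
      have hmemS : ∀ ν, I ν ∈ S := fun ν => Finset.mem_image_of_mem I (Finset.mem_univ ν)
      have hsum : Finset.univ.card = ∑ l ∈ S, (Finset.univ.filter (fun ν => I ν = l)).card :=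
        Finset.card_eq_sum_card_fiberwise (fun ν _ => hmemS ν)
      have h2le : ∀ l ∈ S, 2 ≤ (Finset.univ.filter (fun ν => I ν = l)).card := by
        intro l hl
        obtain ⟨ν, _, hν⟩ := Finset.mem_image.1 hl
        have hpos : 0 < (Finset.univ.filter (fun ν => I ν = l)).card :=
          Finset.card_pos.2 ⟨ν, by simp [hν]⟩
        have := h2 l
        omega
      have hcard2 : 2 * S.card ≤ p := by
        calc 2 * S.card = ∑ _l ∈ S, 2 := by rw [Finset.sum_const]; ring
          _ ≤ ∑ l ∈ S, (Finset.univ.filter (fun ν => I ν = l)).card :=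
              Finset.sum_le_sum h2le
          _ = Finset.univ.card := hsum.symm
          _ = p := by simp
      have hScard : S.card ≤ m := by omega
      have hS1 : 1 ≤ S.card := Finset.card_pos.2 ⟨I ⟨0, hp⟩, hmemS _⟩
      have hSsub : S ⊆ Finset.Icc 1 q := by
        intro x hx
        obtain ⟨ν, _, hν⟩ := Finset.mem_image.1 hx
        exact Finset.mem_Icc.2 (hν ▸ h1 ν)
      exact Finset.mem_coe.2 (Finset.mem_biUnion.2 ⟨S.card, Finset.mem_Icc.2 ⟨hS1, hScard⟩,
        Finset.mem_biUnion.2 ⟨S, Finset.mem_powersetCard.2 ⟨hSsub, rfl⟩,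
          Fintype.mem_piFinset.2 hmemS⟩⟩)
    have h1 : (EffectiveSet q p).ncard ≤ F.card := by
      calc (EffectiveSet q p).ncard ≤ (↑F : Set (Fin p → ℕ)).ncard :=
            Set.ncard_le_ncard hsub F.finite_toSet
        _ = F.card := Set.ncard_coe_finset F
    refine h1.trans ?_
    refine (Finset.card_biUnion_le).trans ?_
    refine Finset.sum_le_sum fun l hl => ?_
    refine (Finset.card_biUnion_le).trans ?_
    calc ∑ S ∈ (Finset.Icc 1 q).powersetCard l, (Fintype.piFinset fun _ : Fin p => S).card
        = ∑ _S ∈ (Finset.Icc 1 q).powersetCard l, l ^ p := by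
          refine Finset.sum_congr rfl fun S hS => ?_
          rw [Fintype.card_piFinset]
          simp [(Finset.mem_powersetCard.1 hS).2]
      _ = Nat.choose q l * l ^ p := by
          rw [Finset.sum_const, Finset.card_powersetCard, Nat.card_Icc, smul_eq_mul]
          norm_num
      _ ≤ Nat.choose q l * l ^ p := le_rfl
  · -- Part 2
    have hmq2 : m ≤ q / 2 := Nat.div_le_div_right hpq
    calc ∑ l ∈ Finset.Icc 1 m, Nat.choose q l * l ^ p
        ≤ ∑ _l ∈ Finset.Icc 1 m, Nat.choose q m * m ^ p := by
          refine Finset.sum_le_sum fun l hl => ?_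
          obtain ⟨hl1, hl2⟩ := Finset.mem_Icc.1 hl
          exact Nat.mul_le_mul (choose_mono_half' hl2 hmq2) (Nat.pow_le_pow_left hl2 p)
      _ = m * Nat.choose q m * m ^ p := by
          rw [Finset.sum_const, Nat.card_Icc, Nat.add_sub_cancel, smul_eq_mul]
          ring
  · -- Part 3
    rcases Nat.eq_zero_or_pos m with hm0 | hm1
    · simp only [hm0]
      push_cast
      have hq0 : (0:ℝ) ≤ q := by positivity
      have hp0 : (0:ℝ) < (p:ℝ)/2 := by
        have : (1:ℝ) ≤ p := by exact_mod_cast hp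
        linarith
      simp only [Nat.cast_zero, zero_mul]
      positivity
    · have hp2 : 2 ≤ p := by omega
      have hmp : m ≤ p := Nat.div_le_self p 2
      have hmq : m ≤ q := hmp.trans hpq
      have hq0 : (0:ℝ) < q := by exact_mod_cast Nat.lt_of_lt_of_le (by omega) hpq
      have hm0 : (0:ℝ) < (m:ℝ) := by exact_mod_cast hm1
      have hMQ : (m:ℝ) ≤ (q:ℝ) := by exact_mod_cast hmq
      have hterm : (m:ℝ)^m / m.factorial ≤ Real.exp m := by
        refine le_trans ?_ (Real.sum_le_exp_of_nonneg (by positivity) (m+1))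
        exact Finset.single_le_sum (f := fun i => (m:ℝ)^i / i.factorial)
          (fun i _ => by positivity) (Finset.self_mem_range_succ m)
      have hchoose : (q.choose m : ℝ) ≤ (q:ℝ)^m / m.factorial := by
        have := Nat.choose_le_pow_div (α := ℝ) m q
        push_cast at this ⊢
        convert this using 2
      have heq : (m:ℝ)^p = (m:ℝ)^(p-m) * (m:ℝ)^m := by
        rw [← pow_add]; congr 1; omega
      have key : ((m * q.choose m * m^p : ℕ) : ℝ)
          ≤ (m:ℝ) * Real.exp m * ((q:ℝ)^m * (m:ℝ)^(p-m)) := by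
        push_cast
        calc (m:ℝ) * (q.choose m : ℝ) * (m:ℝ)^p
            ≤ (m:ℝ) * ((q:ℝ)^m / m.factorial) * (m:ℝ)^p := by
              have h3 : (0:ℝ) ≤ (m:ℝ)^p := by positivity
              gcongr
          _ = (m:ℝ) * ((q:ℝ)^m * (m:ℝ)^(p-m)) * ((m:ℝ)^m / m.factorial) := by
              rw [heq]; ring
          _ ≤ (m:ℝ) * ((q:ℝ)^m * (m:ℝ)^(p-m)) * Real.exp m := by
              have : (0:ℝ) ≤ (m:ℝ) * ((q:ℝ)^m * (m:ℝ)^(p-m)) := by positivity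
              gcongr
          _ = (m:ℝ) * Real.exp m * ((q:ℝ)^m * (m:ℝ)^(p-m)) := by ring
      refine key.trans ?_
      set P := (p:ℝ)/2 with hPdef
      have hMP : (m:ℝ) ≤ P := by
        rw [hPdef, le_div_iff₀ (by norm_num)]
        exact_mod_cast Nat.div_mul_le_self p 2
      have hP0 : (0:ℝ) < P := lt_of_lt_of_le hm0 hMP
      have e0 : (q:ℝ)^m = (q:ℝ) ^ ((m:ℕ):ℝ) := (Real.rpow_natCast q m).symm
      have e0' : (m:ℝ)^(p-m) = (m:ℝ) ^ (((p:ℝ) - (m:ℝ))) := by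
        rw [← Real.rpow_natCast (m:ℝ) (p-m)]
        congr 1
        push_cast [Nat.cast_sub hmp]
        ring
      rw [e0, e0']
      have e1 : (m:ℝ) ^ ((p:ℝ) - (m:ℝ)) = (m:ℝ) ^ (P - (m:ℝ)) * (m:ℝ) ^ P := by
        rw [← Real.rpow_add hm0]; congr 1; rw [hPdef]; ring
      rw [e1]
      have e2 : (m:ℝ) ^ (P - (m:ℝ)) ≤ (q:ℝ) ^ (P - (m:ℝ)) :=
        Real.rpow_le_rpow hm0.le hMQ (by linarith)
      have e4 : (m:ℝ) ^ P ≤ P ^ P := Real.rpow_le_rpow hm0.le hMP hP0.le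
      have e5 : Real.exp (m:ℝ) ≤ Real.exp P := Real.exp_le_exp.2 hMP
      calc (m:ℝ) * Real.exp (m:ℝ) * ((q:ℝ) ^ ((m:ℕ):ℝ) * ((m:ℝ) ^ (P - (m:ℝ)) * (m:ℝ) ^ P))
          ≤ P * Real.exp P * ((q:ℝ) ^ ((m:ℕ):ℝ) * ((q:ℝ) ^ (P - (m:ℝ)) * P ^ P)) := by
            gcongr
        _ = P * Real.exp P * (q:ℝ) ^ P * P ^ P := by
            have hexp : ((m:ℕ):ℝ) + (P - (m:ℝ)) = P := by ring
            rw [← mul_assoc ((q:ℝ) ^ ((m:ℕ):ℝ)), ← Real.rpow_add hq0, hexp]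
            ring
end

section
/- Assume 3k ≤ N and let I_{2k} ∈ ℰ_{N,2k} with |S(I_{2k})| = l (so 1 ≤ l ≤ k). Then |𝒫^{I_{2k}}_{N,2k}| = l^{2k} + Σ_{h=2}^{2k} l^{2k−h} · C(2k,h) · |ℰ_{N−l,h}|, and moreover |𝒫^{I_{2k}}_{N,2k}| ≤ 2k · e^k · 2^{2k} · k^k · N^k, where C(2k,h) denotes the binomial coefficient 2k choose h. -/
/-- The "effective set" `𝒫^{I}_{N,2k}` of indices `J = (j_1, …, j_{2k})` with entries in
`{1, …, N}` such that either every `j_ν` lies in `S(I)` (the set of values of `I`), or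
every `j_ν` outside `S(I)` is repeated, i.e. there exists `ν' ≠ ν` with `j_{ν'} = j_ν`. -/
def PSetJ (N k : ℕ) (I : Fin (2 * k) → ℕ) : Set (Fin (2 * k) → ℕ) :=
  {J | (∀ ν, 1 ≤ J ν ∧ J ν ≤ N) ∧
    ((∀ ν, J ν ∈ Set.range I) ∨
      (∀ ν, J ν ∉ Set.range I → ∃ ν', ν' ≠ ν ∧ J ν' = J ν))}

/-- Finset version of the effective set, with the "partner" formulation. -/
def effFinset (q p : ℕ) : Finset (Fin p → ℕ) :=
  (Fintype.piFinset fun _ => Finset.Icc 1 q).filter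
    (fun I => ∀ ν, ∃ ν', ν' ≠ ν ∧ I ν' = I ν)

/-- The multiplicity condition is equivalent to the partner condition. -/
lemma partner_iff {p : ℕ} (J : Fin p → ℕ) :
    (∀ m, (Finset.univ.filter (fun ν => J ν = m)).card ≠ 1) ↔
      ∀ ν, ∃ ν', ν' ≠ ν ∧ J ν' = J ν := by
  constructor
  · intro h ν
    have h1 : ν ∈ Finset.univ.filter (fun ν' => J ν' = J ν) := by simp
    have h2 : 1 < (Finset.univ.filter (fun ν' => J ν' = J ν)).card := by
      rcases Nat.lt_or_ge 1 (Finset.univ.filter (fun ν' => J ν' = J ν)).card with h' | h'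
      · exact h'
      · exfalso
        have : 0 < (Finset.univ.filter (fun ν' => J ν' = J ν)).card :=
          Finset.card_pos.2 ⟨ν, h1⟩
        exact h (J ν) (le_antisymm h' this)
    obtain ⟨ν', hν', hne⟩ := Finset.exists_mem_ne h2 ν
    exact ⟨ν', hne, (Finset.mem_filter.1 hν').2⟩
  · intro h m hm
    obtain ⟨ν, hν⟩ := Finset.card_eq_one.1 hm
    have hνmem : ν ∈ Finset.univ.filter (fun ν' => J ν' = m) := hν ▸ Finset.mem_singleton_self ν
    have hJν : J ν = m := (Finset.mem_filter.1 hνmem).2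
    obtain ⟨ν', hne, hJ⟩ := h ν
    have : ν' ∈ Finset.univ.filter (fun ν'' => J ν'' = m) := by
      simp [hJ, hJν]
    rw [hν, Finset.mem_singleton] at this
    exact hne this

lemma effectiveSet_eq (q p : ℕ) : EffectiveSet q p = ↑(effFinset q p) := by
  ext I
  simp only [EffectiveSet, Set.mem_setOf_eq, effFinset, Finset.coe_filter,
    Fintype.mem_piFinset, Finset.mem_Icc, Set.mem_setOf_eq]
  rw [partner_iff]

/-- Finset version of `PSetJ`. -/
def pFinset (N k : ℕ) (I : Fin (2 * k) → ℕ) : Finset (Fin (2 * k) → ℕ) :=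
  (Fintype.piFinset fun _ => Finset.Icc 1 N).filter
    (fun J => ∀ ν, J ν ∉ Finset.univ.image I → ∃ ν', ν' ≠ ν ∧ J ν' = J ν)

lemma coe_image_univ {p : ℕ} (I : Fin p → ℕ) :
    (↑(Finset.univ.image I) : Set ℕ) = Set.range I := by
  rw [Finset.coe_image, Finset.coe_univ, Set.image_univ]

lemma pSetJ_eq (N k : ℕ) (I : Fin (2 * k) → ℕ) : PSetJ N k I = ↑(pFinset N k I) := by
  ext J
  simp only [PSetJ, Set.mem_setOf_eq, pFinset, Finset.coe_filter,
    Fintype.mem_piFinset, Finset.mem_Icc, Set.mem_setOf_eq]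
  have hiff : ∀ x, x ∈ Finset.univ.image I ↔ x ∈ Set.range I := by
    intro x; simp [Set.mem_range, eq_comm]
  constructor
  · rintro ⟨hb, h | h⟩
    · exact ⟨hb, fun ν hν => absurd ((hiff _).2 (h ν)) hν⟩
    · exact ⟨hb, fun ν hν => h ν (fun hc => hν ((hiff _).2 hc))⟩
  · rintro ⟨hb, h⟩
    exact ⟨hb, Or.inr fun ν hν => h ν (fun hc => hν ((hiff _).1 hc))⟩


lemma eff_zero (q : ℕ) : (effFinset q 0).card = 1 := by
  rw [Finset.card_eq_one]
  refine ⟨fun i => i.elim0, ?_⟩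
  ext J
  simp only [effFinset, Finset.mem_filter, Fintype.mem_piFinset, Finset.mem_singleton]
  constructor
  · intro _; funext i; exact i.elim0
  · rintro rfl; exact ⟨fun i => i.elim0, fun i => i.elim0⟩

lemma eff_one (q : ℕ) : (effFinset q 1).card = 0 := by
  rw [Finset.card_eq_zero]
  ext J
  simp only [effFinset, Finset.mem_filter, Finset.notMem_empty, iff_false, not_and]
  intro _ h
  obtain ⟨ν', hne, _⟩ := h 0
  exact hne (Subsingleton.elim ν' 0)

/-- If every member of `W` is a value of `J` attained at least twice, then `2|W| ≤ p`. -/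
lemma two_mul_card_le {p : ℕ} (J : Fin p → ℕ) (W : Finset ℕ)
    (hW : W ⊆ Finset.univ.image J)
    (h2 : ∀ w ∈ W, 1 < (Finset.univ.filter (fun ν => J ν = w)).card) :
    2 * W.card ≤ p := by
  have hp : (Finset.univ : Finset (Fin p)).card =
      ∑ m ∈ Finset.univ.image J, (Finset.univ.filter (fun ν => J ν = m)).card :=
    Finset.card_eq_sum_card_fiberwise (fun ν _ => Finset.mem_image_of_mem J (Finset.mem_univ ν))
  have h3 : ∑ w ∈ W, 2 ≤ ∑ w ∈ W, (Finset.univ.filter (fun ν => J ν = w)).card :=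
    Finset.sum_le_sum (fun w hw => h2 w hw)
  have h4 : ∑ w ∈ W, (Finset.univ.filter (fun ν => J ν = w)).card ≤
      ∑ m ∈ Finset.univ.image J, (Finset.univ.filter (fun ν => J ν = m)).card :=
    Finset.sum_le_sum_of_subset hW
  have h5 : (Finset.univ : Finset (Fin p)).card = p := by simp
  have h6 : ∑ w ∈ W, 2 = 2 * W.card := by rw [Finset.sum_const]; ring
  omega

lemma choose_mono_of_le_half {N m k : ℕ} (hmk : m ≤ k) (hk : 2 * k ≤ N) :
    N.choose m ≤ N.choose k := by
  induction k with
  | zero => simp [Nat.le_zero.1 hmk]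
  | succ k ih =>
    rcases Nat.lt_or_ge m (k+1) with h | h
    · have h1 : N.choose m ≤ N.choose k := ih (by omega) (by omega)
      have h2 : N.choose k ≤ N.choose (k+1) :=
        Nat.choose_le_succ_of_lt_half_left (by omega)
      omega
    · have : m = k + 1 := by omega
      simp [this]

section MapFn
variable {V W : Finset ℕ}

/-- Transport along an equivalence of finsets of naturals, extended by `0`. -/
def mapFn (w : ↥V ≃ ↥W) : ℕ → ℕ :=
  fun x => if hx : x ∈ V then ((w ⟨x, hx⟩ : ↥W) : ℕ) else 0

lemma mapFn_mem (w : ↥V ≃ ↥W) {x : ℕ} (hx : x ∈ V) : mapFn w x ∈ W := by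
  simp only [mapFn, dif_pos hx]
  exact (w ⟨x, hx⟩).2

lemma mapFn_symm_apply (w : ↥V ≃ ↥W) {x : ℕ} (hx : x ∈ V) :
    mapFn w.symm (mapFn w x) = x := by
  simp only [mapFn, dif_pos hx, dif_pos (w ⟨x, hx⟩).2, Subtype.coe_eta,
    Equiv.symm_apply_apply]

end MapFn

lemma mem_effFinset {q p : ℕ} (J : Fin p → ℕ) :
    J ∈ effFinset q p ↔
      (∀ i, J i ∈ Finset.Icc 1 q) ∧ ∀ i, ∃ i', i' ≠ i ∧ J i' = J i := by
  simp [effFinset, Fintype.mem_piFinset]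

lemma card_fiber (N k l : ℕ) (I : Fin (2 * k) → ℕ)
    (hIb : ∀ ν, 1 ≤ I ν ∧ I ν ≤ N)
    (hl : (Finset.univ.image I).card = l)
    (T : Finset (Fin (2 * k))) :
    ((pFinset N k I).filter
        (fun J => Finset.univ.filter (fun ν => J ν ∉ Finset.univ.image I) = T)).card
      = l ^ (2 * k - T.card) * (effFinset (N - l) T.card).card := by
  set S := Finset.univ.image I with hSdef
  have hSsub : S ⊆ Finset.Icc 1 N := by
    intro x hx
    obtain ⟨ν, -, rfl⟩ := Finset.mem_image.1 hx
    exact Finset.mem_Icc.2 (hIb ν)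
  set V := Finset.Icc 1 N \ S with hVdef
  have hV : V.card = N - l := by
    rw [hVdef, Finset.card_sdiff_of_subset hSsub, Nat.card_Icc, hl]
    omega
  have hVIcc : ∀ x ∈ V, x ∈ Finset.Icc 1 N := fun x hx => (Finset.mem_sdiff.1 hx).1
  have hVS : ∀ x ∈ V, x ∉ S := fun x hx => (Finset.mem_sdiff.1 hx).2
  have hmemV : ∀ x, x ∈ Finset.Icc 1 N → x ∉ S → x ∈ V :=
    fun x h1 h2 => Finset.mem_sdiff.2 ⟨h1, h2⟩
  have hfib : ∀ J : Fin (2*k) → ℕ,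
      (J ∈ (pFinset N k I).filter
          (fun J => Finset.univ.filter (fun ν => J ν ∉ S) = T) ↔
        ((∀ ν, J ν ∈ Finset.Icc 1 N) ∧ (∀ ν, J ν ∉ S → ∃ ν', ν' ≠ ν ∧ J ν' = J ν)
          ∧ ∀ ν, J ν ∉ S ↔ ν ∈ T)) := by
    intro J
    rw [hSdef]
    simp only [Finset.mem_filter, pFinset, Fintype.mem_piFinset, Finset.ext_iff,
      Finset.mem_filter, Finset.mem_univ, true_and, and_assoc, Finset.mem_Icc]
  set A := Fintype.piFinset (fun ν : Fin (2*k) => if ν ∈ T then ({0} : Finset ℕ) else S)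
    with hA
  set B := (Fintype.piFinset
      (fun ν : Fin (2*k) => if ν ∈ T then V else ({0} : Finset ℕ))).filter
      (fun g => ∀ ν ∈ T, ∃ ν' ∈ T, ν' ≠ ν ∧ g ν' = g ν) with hB
  have hBmem : ∀ g : Fin (2*k) → ℕ, g ∈ B ↔
      ((∀ ν, g ν ∈ (if ν ∈ T then V else ({0} : Finset ℕ)))
        ∧ ∀ ν ∈ T, ∃ ν' ∈ T, ν' ≠ ν ∧ g ν' = g ν) := by
    intro g
    rw [hB]
    simp only [Finset.mem_filter, Fintype.mem_piFinset]
  have step1 : ((pFinset N k I).filter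
      (fun J => Finset.univ.filter (fun ν => J ν ∉ S) = T)).card = (A ×ˢ B).card := by
    apply Finset.card_nbij'
      (i := fun J => (fun ν => if ν ∈ T then 0 else J ν, fun ν => if ν ∈ T then J ν else 0))
      (j := fun q => fun ν => if ν ∈ T then q.2 ν else q.1 ν)
    · intro J hJ
      obtain ⟨h1, h2, h3⟩ := (hfib J).1 hJ
      rw [Finset.mem_coe, Finset.mem_product]
      constructor
      · rw [hA, Fintype.mem_piFinset]
        intro ν
        by_cases hν : ν ∈ T
        · simp [hν]
        · have : ¬ (J ν ∉ S) := fun hc => hν ((h3 ν).1 hc)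
          simp only [if_neg hν]
          simpa using not_not.1 this
      · rw [hBmem]
        constructor
        · intro ν
          by_cases hν : ν ∈ T
          · simp only [if_pos hν]
            exact hmemV _ (h1 ν) ((h3 ν).2 hν)
          · simp [hν]
        · intro ν hν
          obtain ⟨ν', hne, heq⟩ := h2 ν ((h3 ν).2 hν)
          have hν'T : ν' ∈ T := (h3 ν').1 (by rw [heq]; exact (h3 ν).2 hν)
          exact ⟨ν', hν'T, hne, by simp only [if_pos hν'T, if_pos hν, heq]⟩
    · rintro ⟨a, b⟩ hq
      rw [Finset.mem_coe, Finset.mem_product] at hq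
      obtain ⟨haA, hbB⟩ := hq
      rw [hA, Fintype.mem_piFinset] at haA
      rw [hBmem] at hbB
      obtain ⟨hb1, hb2⟩ := hbB
      have haS : ∀ ν, ν ∉ T → a ν ∈ S := by
        intro ν hν; have := haA ν; rwa [if_neg hν] at this
      have hbV : ∀ ν, ν ∈ T → b ν ∈ V := by
        intro ν hν; have := hb1 ν; rwa [if_pos hν] at this
      rw [Finset.mem_coe, hfib]
      refine ⟨?_, ?_, ?_⟩
      · intro ν
        by_cases hν : ν ∈ T
        · simp only [if_pos hν]; exact hVIcc _ (hbV ν hν)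
        · simp only [if_neg hν]; exact hSsub (haS ν hν)
      · intro ν hν
        by_cases hνT : ν ∈ T
        · simp only [if_pos hνT] at hν ⊢
          obtain ⟨ν', hν'T, hne, heq⟩ := hb2 ν hνT
          exact ⟨ν', hne, by simp only [if_pos hν'T]; exact heq⟩
        · exact absurd (haS ν hνT) (by simpa only [if_neg hνT] using hν)
      · intro ν
        by_cases hν : ν ∈ T
        · simp only [if_pos hν, hν, iff_true]
          exact hVS _ (hbV ν hν)
        · simp only [if_neg hν, hν, iff_false, not_not]
          exact haS ν hν
    · intro J hJ
      funext ν
      by_cases hν : ν ∈ T <;> simp [hν]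
    · rintro ⟨a, b⟩ hq
      rw [Finset.mem_coe, Finset.mem_product] at hq
      obtain ⟨haA, hbB⟩ := hq
      rw [hA, Fintype.mem_piFinset] at haA
      rw [hBmem] at hbB
      obtain ⟨hb1, -⟩ := hbB
      have ha0 : ∀ ν, ν ∈ T → a ν = 0 := by
        intro ν hν; have := haA ν; rw [if_pos hν] at this; simpa using this
      have hb0 : ∀ ν, ν ∉ T → b ν = 0 := by
        intro ν hν; have := hb1 ν; rw [if_neg hν] at this; simpa using this
      refine Prod.ext ?_ ?_
      · funext ν
        by_cases hν : ν ∈ T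
        · simp only [if_pos hν]; exact (ha0 ν hν).symm
        · simp only [if_neg hν]
      · funext ν
        by_cases hν : ν ∈ T
        · simp only [if_pos hν]
        · simp only [if_neg hν]; exact (hb0 ν hν).symm
  have step2 : A.card = l ^ (2 * k - T.card) := by
    rw [hA, Fintype.card_piFinset]
    have hcard : ∀ ν : Fin (2*k),
        (if ν ∈ T then ({0} : Finset ℕ) else S).card = if ν ∈ T then 1 else l := by
      intro ν; by_cases hν : ν ∈ T <;> simp [hν, hl]
    rw [Finset.prod_congr rfl (fun ν _ => hcard ν), Finset.prod_ite]
    have hTfilter : Finset.univ.filter (fun ν => ν ∈ T) = T := by ext ν; simp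
    have hnot : (Finset.univ.filter (fun ν : Fin (2*k) => ν ∉ T)).card = 2 * k - T.card := by
      have : Finset.univ.filter (fun ν : Fin (2*k) => ν ∉ T) = Tᶜ := by ext ν; simp
      rw [this, Finset.card_compl, Fintype.card_fin]
    rw [Finset.prod_const, Finset.prod_const, hnot, one_pow, one_mul]
  have step3 : B.card = (effFinset (N - l) T.card).card := by
    have hVcard : Fintype.card ↥V = Fintype.card ↥(Finset.Icc 1 (N - l)) := by
      rw [Fintype.card_coe, Fintype.card_coe, hV, Nat.card_Icc]
      exact (Nat.succ_sub_one _).symm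
    set w := Fintype.equivOfCardEq hVcard with hw
    set e := Fintype.equivFinOfCardEq (Fintype.card_coe T) with he
    apply Finset.card_nbij'
      (i := fun g => fun i : Fin T.card => mapFn w (g ↑(e.symm i)))
      (j := fun J => fun ν => if hν : ν ∈ T then mapFn w.symm (J (e ⟨ν, hν⟩)) else 0)
    · intro g hg
      rw [Finset.mem_coe, hBmem] at hg
      obtain ⟨hg1, hg2⟩ := hg
      have hgV : ∀ ν ∈ T, g ν ∈ V := by
        intro ν hν; have := hg1 ν; rwa [if_pos hν] at this
      rw [Finset.mem_coe, mem_effFinset]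
      beta_reduce
      constructor
      · intro i
        exact mapFn_mem w (hgV _ (e.symm i).2)
      · intro i
        obtain ⟨ν', hν'T, hne, heq⟩ := hg2 ↑(e.symm i) (e.symm i).2
        refine ⟨e ⟨ν', hν'T⟩, ?_, ?_⟩
        · intro hcontra
          have h1 : (⟨ν', hν'T⟩ : ↥T) = e.symm i := by
            rw [← hcontra, Equiv.symm_apply_apply]
          exact hne (congrArg Subtype.val h1)
        · rw [Equiv.symm_apply_apply, heq]
    · intro J hJ
      rw [Finset.mem_coe, mem_effFinset] at hJ
      obtain ⟨hJ1, hJ2⟩ := hJ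
      rw [Finset.mem_coe, hBmem]
      beta_reduce
      constructor
      · intro ν
        by_cases hν : ν ∈ T
        · rw [if_pos hν, dif_pos hν]
          exact mapFn_mem w.symm (hJ1 _)
        · rw [if_neg hν, dif_neg hν]
          simp
      · intro ν hν
        obtain ⟨i', hne, heq⟩ := hJ2 (e ⟨ν, hν⟩)
        refine ⟨↑(e.symm i'), (e.symm i').2, ?_, ?_⟩
        · intro hcontra
          have h1 : e.symm i' = ⟨ν, hν⟩ := Subtype.ext hcontra
          have h2 : i' = e ⟨ν, hν⟩ := by rw [← h1, Equiv.apply_symm_apply]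
          exact hne h2
        · rw [dif_pos (e.symm i').2, dif_pos hν]
          rw [Subtype.coe_eta, Equiv.apply_symm_apply, heq]
    · intro g hg
      rw [Finset.mem_coe, hBmem] at hg
      obtain ⟨hg1, -⟩ := hg
      have hgV : ∀ ν ∈ T, g ν ∈ V := by
        intro ν hν; have := hg1 ν; rwa [if_pos hν] at this
      funext ν
      beta_reduce
      by_cases hν : ν ∈ T
      · rw [dif_pos hν]
        show mapFn w.symm (mapFn w (g ↑(e.symm (e ⟨ν, hν⟩)))) = g ν
        rw [Equiv.symm_apply_apply]
        exact mapFn_symm_apply w (hgV ν hν)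
      · rw [dif_neg hν]
        have := hg1 ν; rw [if_neg hν] at this
        simpa using (Finset.mem_singleton.1 this).symm
    · intro J hJ
      rw [Finset.mem_coe, mem_effFinset] at hJ
      obtain ⟨hJ1, -⟩ := hJ
      funext i
      show mapFn w ((if hν : ↑(e.symm i) ∈ T then mapFn w.symm (J (e ⟨↑(e.symm i), hν⟩)) else 0)) = J i
      rw [dif_pos (e.symm i).2, Subtype.coe_eta, Equiv.apply_symm_apply]
      have h := mapFn_symm_apply w.symm (hJ1 i)
      rwa [Equiv.symm_symm] at h
  rw [step1, Finset.card_product, step2, step3]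

lemma card_pFinset (N k l : ℕ) (hk : 1 ≤ k) (I : Fin (2 * k) → ℕ)
    (hIb : ∀ ν, 1 ≤ I ν ∧ I ν ≤ N)
    (hl : (Finset.univ.image I).card = l) :
    (pFinset N k I).card =
      l ^ (2 * k) + ∑ h ∈ Finset.Icc 2 (2 * k),
        l ^ (2 * k - h) * Nat.choose (2 * k) h * (effFinset (N - l) h).card := by
  have hstep : (pFinset N k I).card = ∑ T : Finset (Fin (2*k)),
      ((pFinset N k I).filter
        (fun J => Finset.univ.filter (fun ν => J ν ∉ Finset.univ.image I) = T)).card :=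
    Finset.card_eq_sum_card_fiberwise (fun J _ => Finset.mem_univ _)
  rw [hstep, Finset.sum_congr rfl (fun T _ => card_fiber N k l I hIb hl T)]
  have hgroup : ∑ T : Finset (Fin (2*k)),
        l ^ (2*k - T.card) * (effFinset (N - l) T.card).card
      = ∑ h ∈ Finset.range (2*k+1),
          (2*k).choose h * (l ^ (2*k - h) * (effFinset (N - l) h).card) := by
    rw [← Finset.sum_fiberwise_of_maps_to (g := Finset.card)
      (t := Finset.range (2*k+1))
      (fun T _ => Finset.mem_range.2 (Nat.lt_succ_of_le (by simpa using Finset.card_le_univ T)))]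
    apply Finset.sum_congr rfl
    intro h hh
    rw [Finset.sum_congr rfl
      (fun T hT => by rw [(Finset.mem_filter.1 hT).2])]
    rw [Finset.sum_const, smul_eq_mul]
    congr 1
    have heq : Finset.univ.filter (fun T : Finset (Fin (2*k)) => T.card = h)
        = Finset.powersetCard h Finset.univ := by
      rw [Finset.powersetCard_eq_filter, Finset.powerset_univ]
    rw [heq, Finset.card_powersetCard, Finset.card_univ, Fintype.card_fin]
  rw [hgroup]
  have hsplit : Finset.range (2*k+1) = insert 0 (insert 1 (Finset.Icc 2 (2*k))) := by
    ext x
    simp only [Finset.mem_range, Finset.mem_insert, Finset.mem_Icc]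
    clear hgroup hstep
    omega
  rw [hsplit, Finset.sum_insert (by simp), Finset.sum_insert (by simp)]
  rw [eff_zero, eff_one]
  simp only [Nat.choose_zero_right, Nat.sub_zero, mul_one, one_mul, Nat.mul_zero, mul_zero,
    Nat.zero_add, zero_add]
  congr 1
  apply Finset.sum_congr rfl
  intro h _
  ring

lemma card_pFinset_le (N k l : ℕ) (hk : 1 ≤ k) (hkN : 2 * k ≤ N)
    (I : Fin (2 * k) → ℕ)
    (hIb : ∀ ν, 1 ≤ I ν ∧ I ν ≤ N)
    (hIeff : ∀ ν, ∃ ν', ν' ≠ ν ∧ I ν' = I ν)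
    (hl : (Finset.univ.image I).card = l) :
    (pFinset N k I).card ≤ 2 * k * Nat.choose N k * (2*k) ^ (2*k) := by
  have hlk : l ≤ k := by
    have h2 : 2 * (Finset.univ.image I).card ≤ 2 * k := by
      apply two_mul_card_le I _ (Finset.Subset.refl _)
      intro w hw
      obtain ⟨ν, -, rfl⟩ := Finset.mem_image.1 hw
      obtain ⟨ν', hne, heq⟩ := hIeff ν
      exact Finset.one_lt_card.2
        ⟨ν, by simp, ν', by simp [heq], fun hc => hne hc.symm⟩
    omega
  set Wset := (Finset.Icc 1 N).powerset.filter (fun W => W.card ≤ k) with hWset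
  have hsub : pFinset N k I ⊆
      Wset.biUnion (fun W => Fintype.piFinset fun _ : Fin (2*k) =>
        (Finset.univ.image I) ∪ W) := by
    intro J hJ
    rw [pFinset, Finset.mem_filter, Fintype.mem_piFinset] at hJ
    obtain ⟨hJb, hJp⟩ := hJ
    rw [Finset.mem_biUnion]
    refine ⟨Finset.univ.image J \ Finset.univ.image I, ?_, ?_⟩
    · rw [hWset, Finset.mem_filter, Finset.mem_powerset]
      constructor
      · intro x hx
        obtain ⟨ν, -, rfl⟩ := Finset.mem_image.1 (Finset.mem_sdiff.1 hx).1
        exact hJb ν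
      · have h2 : 2 * (Finset.univ.image J \ Finset.univ.image I).card ≤ 2 * k := by
          apply two_mul_card_le J _ (Finset.sdiff_subset)
          intro w hw
          obtain ⟨hw1, hw2⟩ := Finset.mem_sdiff.1 hw
          obtain ⟨ν, -, rfl⟩ := Finset.mem_image.1 hw1
          obtain ⟨ν', hne, heq⟩ := hJp ν hw2
          exact Finset.one_lt_card.2
            ⟨ν, by simp, ν', by simp [heq], fun hc => hne hc.symm⟩
        omega
    · rw [Fintype.mem_piFinset]
      intro ν
      by_cases hν : J ν ∈ Finset.univ.image I
      · exact Finset.mem_union_left _ hν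
      · exact Finset.mem_union_right _
          (Finset.mem_sdiff.2 ⟨Finset.mem_image_of_mem J (Finset.mem_univ ν), hν⟩)
  have hbound : (pFinset N k I).card ≤ Wset.card * (2*k) ^ (2*k) := by
    refine le_trans (Finset.card_le_card hsub) (le_trans (Finset.card_biUnion_le) ?_)
    refine le_trans (Finset.sum_le_sum (g := fun _ => (2*k) ^ (2*k)) ?_) ?_
    · intro W hW
      rw [Fintype.card_piFinset]
      have hc : (Finset.univ.image I ∪ W).card ≤ 2 * k := by
        refine le_trans (Finset.card_union_le _ _) ?_
        rw [hl]
        have hWk : W.card ≤ k := (Finset.mem_filter.1 hW).2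
        omega
      calc ∏ _ν : Fin (2*k), (Finset.univ.image I ∪ W).card
          = (Finset.univ.image I ∪ W).card ^ (2*k) := by
            rw [Finset.prod_const, Finset.card_univ, Fintype.card_fin]
        _ ≤ (2*k) ^ (2*k) := Nat.pow_le_pow_left hc _
    · rw [Finset.sum_const, smul_eq_mul]
  have hWcard : Wset.card ≤ 2 * k * N.choose k := by
    have hsum : Wset.card = ∑ m ∈ Finset.range (k+1),
        (Wset.filter (fun W => W.card = m)).card :=
      Finset.card_eq_sum_card_fiberwise
        (fun W hW => Finset.mem_range.2 (Nat.lt_succ_of_le (Finset.mem_filter.1 hW).2))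
    have hfib : ∀ m ∈ Finset.range (k+1),
        (Wset.filter (fun W => W.card = m)).card = N.choose m := by
      intro m hm
      have hmk : m ≤ k := Nat.lt_succ_iff.1 (Finset.mem_range.1 hm)
      have : Wset.filter (fun W => W.card = m) = Finset.powersetCard m (Finset.Icc 1 N) := by
        ext W
        rw [hWset]
        simp only [Finset.mem_filter, Finset.mem_powerset, Finset.mem_powersetCard]
        constructor
        · rintro ⟨⟨h1, -⟩, h3⟩; exact ⟨h1, h3⟩
        · rintro ⟨h1, h2⟩; exact ⟨⟨h1, h2 ▸ hmk⟩, h2⟩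
      rw [this, Finset.card_powersetCard, Nat.card_Icc, Nat.succ_sub_one]
    rw [hsum, Finset.sum_congr rfl hfib]
    have hmono : ∀ m ∈ Finset.range (k+1), N.choose m ≤ N.choose k :=
      fun m hm => choose_mono_of_le_half (Nat.lt_succ_iff.1 (Finset.mem_range.1 hm)) hkN
    refine le_trans (Finset.sum_le_sum hmono) ?_
    rw [Finset.sum_const, Finset.card_range, smul_eq_mul]
    have : k + 1 ≤ 2 * k := by omega
    exact Nat.mul_le_mul_right _ this
  calc (pFinset N k I).card ≤ Wset.card * (2*k) ^ (2*k) := hbound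
    _ ≤ 2 * k * N.choose k * (2*k) ^ (2*k) := Nat.mul_le_mul_right _ hWcard

/-- **Counting the choices of the multi-indices `J_{2k}`** (Lemma 3.5 of the paper).
Assume `3k ≤ N` and `I_{2k} ∈ ℰ_{N,2k}` with `|S(I_{2k})| = l`.  Then
`|𝒫^{I}_{N,2k}| = l^{2k} + Σ_{h=2}^{2k} l^{2k−h} C(2k,h) |ℰ_{N−l,h}|`, and moreover
`|𝒫^{I}_{N,2k}| ≤ 2k e^k 2^{2k} k^k N^k`. -/
theorem stmt11 (N k l : ℕ) (hk : 1 ≤ k) (hkN : 3 * k ≤ N)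
    (I : Fin (2 * k) → ℕ) (hI : I ∈ EffectiveSet N (2 * k))
    (hl : (Finset.univ.image I).card = l) :
    (PSetJ N k I).ncard =
      l ^ (2 * k) + ∑ h ∈ Finset.Icc 2 (2 * k),
        l ^ (2 * k - h) * Nat.choose (2 * k) h * (EffectiveSet (N - l) h).ncard ∧
    ((PSetJ N k I).ncard : ℝ) ≤
      2 * (k : ℝ) * Real.exp k * 2 ^ (2 * k) * (k : ℝ) ^ k * (N : ℝ) ^ k := by
  obtain ⟨hIb, hIm⟩ := hI
  have hIeff : ∀ ν, ∃ ν', ν' ≠ ν ∧ I ν' = I ν := (partner_iff I).1 hIm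
  have hcard : (PSetJ N k I).ncard = (pFinset N k I).card := by
    rw [pSetJ_eq, Set.ncard_coe_finset]
  constructor
  · rw [hcard, card_pFinset N k l hk I hIb hl]
    congr 1
    apply Finset.sum_congr rfl
    intro h _
    rw [effectiveSet_eq, Set.ncard_coe_finset]
  · rw [hcard]
    have hb := card_pFinset_le N k l hk (by omega) I hIb hIeff hl
    have hfac : (0:ℝ) < (Nat.factorial k : ℝ) := by
      exact_mod_cast k.factorial_pos
    have hC : ((N.choose k : ℕ) : ℝ) ≤ (N:ℝ)^k / (Nat.factorial k : ℝ) := by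
      exact_mod_cast Nat.choose_le_pow_div (α := ℝ) k N
    have hek : ((k:ℝ))^k ≤ Real.exp k * (Nat.factorial k : ℝ) := by
      have h1 : ((k:ℝ))^k / (Nat.factorial k : ℝ) ≤ Real.exp k :=
        le_trans
          (Finset.single_le_sum (f := fun i => (k:ℝ)^i / (Nat.factorial i : ℝ))
            (fun i _ => by positivity) (Finset.self_mem_range_succ k))
          (Real.sum_le_exp_of_nonneg (Nat.cast_nonneg k) (k+1))
      rwa [div_le_iff₀ hfac] at h1
    have hkey : ((N.choose k : ℕ):ℝ) * (k:ℝ)^k ≤ Real.exp k * (N:ℝ)^k := by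
      calc ((N.choose k : ℕ):ℝ) * (k:ℝ)^k
          ≤ ((N:ℝ)^k / (Nat.factorial k : ℝ)) * (Real.exp k * (Nat.factorial k : ℝ)) :=
            mul_le_mul hC hek (by positivity) (by positivity)
        _ = Real.exp k * (N:ℝ)^k := by field_simp
    calc ((pFinset N k I).card : ℝ)
        ≤ 2 * (k:ℝ) * ((N.choose k : ℕ):ℝ) * (2*(k:ℝ)) ^ (2*k) := by
          exact_mod_cast hb
      _ = 2 * (k:ℝ) * 2^(2*k) * (k:ℝ)^k * (((N.choose k : ℕ):ℝ) * (k:ℝ)^k) := by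
          ring
      _ ≤ 2 * (k:ℝ) * 2^(2*k) * (k:ℝ)^k * (Real.exp k * (N:ℝ)^k) :=
          mul_le_mul_of_nonneg_left hkey (by positivity)
      _ = 2 * (k:ℝ) * Real.exp k * 2 ^ (2*k) * (k:ℝ)^k * (N:ℝ)^k := by ring
end

section
/- For integers k ≥ 1 and 1 ≤ l ≤ k, define U^l_{2k} = Σ over all l-tuples (a_1,…,a_l) of integers with a_1 + … + a_l = 2k and a_ν ≥ 2 for all ν, of (2k)!/(a_1! ⋯ a_l!) · a_1^{a_1} ⋯ a_l^{a_l}. Then U^l_{2k} ≤ e^{2k} · (2k)! · C(2k−l−1, l−1), and moreover C(2k−l−1, l−1) ≤ C(2k, k) ≤ 2^{2k}/√k, so that U^l_{2k} ≤ (1/√k) · (2e)^{2k} · (2k)!. -/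
/-- The quantity `U^l_{2k} = Σ (2k)!/(a_1! ⋯ a_l!) · a_1^{a_1} ⋯ a_l^{a_l}`, the sum
ranging over all `l`-tuples `(a_1, …, a_l)` of integers with `a_1 + … + a_l = 2k` and
`a_ν ≥ 2` for all `ν`. -/
noncomputable def Ulk (k l : ℕ) : ℝ :=
  ∑ a ∈ (Finset.Nat.antidiagonalTuple l (2 * k)).filter (fun a => ∀ ν, 2 ≤ a ν),
    (((2 * k).factorial : ℝ) / ∏ ν, ((a ν).factorial : ℝ)) * ∏ ν, (a ν : ℝ) ^ (a ν)

/-- `n^n ≤ e^n · n!`. -/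
lemma aux_pow_le_exp_mul_factorial (n : ℕ) :
    (n : ℝ) ^ n ≤ Real.exp 1 ^ n * (n.factorial : ℝ) := by
  have hf : (0 : ℝ) < (n.factorial : ℝ) := by positivity
  have h : (n : ℝ) ^ n / (n.factorial : ℝ) ≤ Real.exp n := by
    calc (n : ℝ) ^ n / (n.factorial : ℝ)
        ≤ ∑ i ∈ Finset.range (n + 1), (n : ℝ) ^ i / (i.factorial : ℝ) := by
          refine Finset.single_le_sum (f := fun i => (n : ℝ) ^ i / (i.factorial : ℝ))
            (fun i _ => by positivity) (Finset.self_mem_range_succ n)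
      _ ≤ Real.exp n := Real.sum_le_exp_of_nonneg (Nat.cast_nonneg n) _
  rw [div_le_iff₀ hf] at h
  calc (n : ℝ) ^ n ≤ Real.exp n * (n.factorial : ℝ) := h
    _ = Real.exp 1 ^ n * (n.factorial : ℝ) := by rw [← Real.exp_nat_mul]; norm_num

/-- Counting tuples with all entries `≥ 2` summing to `2k`. -/
lemma aux_card_le (k l : ℕ) (hl1 : 1 ≤ l) (hlk : l ≤ k) :
    ((Finset.Nat.antidiagonalTuple l (2 * k)).filter (fun a => ∀ ν, 2 ≤ a ν)).card
      ≤ Nat.choose (2 * k - l - 1) (l - 1) := by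
  classical
  set m := 2 * k - 2 * l with hm
  set T : Finset (Multiset (Fin l)) :=
    Finset.map ⟨(Sym.toMultiset : Sym (Fin l) m → Multiset (Fin l)), Sym.coe_injective⟩
      Finset.univ with hT
  have hTcard : T.card = Nat.choose (2 * k - l - 1) (l - 1) := by
    rw [hT, Finset.card_map, Finset.card_univ, Sym.card_sym_eq_choose]
    rw [Fintype.card_fin]
    have h1 : l + m - 1 = 2 * k - l - 1 := by omega
    have h2 : (2 * k - l - 1).choose m = (2 * k - l - 1).choose (l - 1) := by
      rw [← Nat.choose_symm (by omega : m ≤ 2 * k - l - 1)]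
      congr 1
      omega
    rw [h1, h2]
  rw [← hTcard]
  apply Finset.card_le_card_of_injOn (fun a => ∑ ν, Multiset.replicate (a ν - 2) ν)
  · intro a ha
    simp only [Finset.mem_coe, Finset.mem_filter, Finset.Nat.mem_antidiagonalTuple] at ha
    have hcard : Multiset.card (∑ ν, Multiset.replicate (a ν - 2) ν) = m := by
      rw [Multiset.card_sum]
      simp only [Multiset.card_replicate]
      rw [Finset.sum_tsub_distrib Finset.univ (fun ν _ => ha.2 ν), ha.1]
      simp [hm, Finset.sum_const]
      omega
    rw [Finset.mem_coe, hT, Finset.mem_map]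
    exact ⟨⟨_, hcard⟩, Finset.mem_univ _, rfl⟩
  · intro a ha b hb hab
    simp only [Finset.mem_coe, Finset.mem_filter, Finset.Nat.mem_antidiagonalTuple] at ha hb
    funext ν
    have hcount : ∀ c : Fin l → ℕ,
        Multiset.count ν (∑ μ, Multiset.replicate (c μ - 2) μ) = c ν - 2 := by
      intro c
      rw [Multiset.count_sum']
      simp only [Multiset.count_replicate]
      rw [Finset.sum_ite_eq' Finset.univ ν (fun μ => c μ - 2)]
      simp
    have := congrArg (Multiset.count ν) hab
    rw [hcount a, hcount b] at this
    have h2a := ha.2 ν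
    have h2b := hb.2 ν
    omega

/-- `C(2k,k)² (3k+1) ≤ 16^k`. -/
lemma aux_centralBinom_sq (n : ℕ) :
    Nat.centralBinom n ^ 2 * (3 * n + 1) ≤ 16 ^ n := by
  induction n with
  | zero => simp [Nat.centralBinom]
  | succ n ih =>
    have h := Nat.succ_mul_centralBinom_succ n
    have hpos : 0 < (n + 1) ^ 2 * (3 * n + 1) := by positivity
    have key : (n + 1) ^ 2 * Nat.centralBinom (n + 1) ^ 2
        = 4 * (2 * n + 1) ^ 2 * Nat.centralBinom n ^ 2 := by
      have h2 := congrArg (· ^ 2) h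
      simp only [mul_pow] at h2
      nlinarith [h2]
    refine Nat.le_of_mul_le_mul_left ?_ hpos
    calc (n + 1) ^ 2 * (3 * n + 1) * (Nat.centralBinom (n + 1) ^ 2 * (3 * (n + 1) + 1))
        = (3 * n + 1) * (3 * n + 4) * ((n + 1) ^ 2 * Nat.centralBinom (n + 1) ^ 2) := by ring
      _ = (3 * n + 4) * (4 * (2 * n + 1) ^ 2) * (Nat.centralBinom n ^ 2 * (3 * n + 1)) := by
          rw [key]; ring
      _ ≤ (3 * n + 4) * (4 * (2 * n + 1) ^ 2) * 16 ^ n := Nat.mul_le_mul_left _ ih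
      _ ≤ (n + 1) ^ 2 * (3 * n + 1) * 16 ^ (n + 1) := by
          rw [pow_succ]
          have hq : (3 * n + 4) * (4 * (2 * n + 1) ^ 2) ≤ (n + 1) ^ 2 * (3 * n + 1) * 16 := by
            nlinarith
          calc (3 * n + 4) * (4 * (2 * n + 1) ^ 2) * 16 ^ n
              ≤ (n + 1) ^ 2 * (3 * n + 1) * 16 * 16 ^ n := Nat.mul_le_mul_right _ hq
            _ = (n + 1) ^ 2 * (3 * n + 1) * (16 ^ n * 16) := by ring

/-- **Bound on the multinomial sum `U^l_{2k}`** (used in the proof of Proposition 3.2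
of the paper).  For `k ≥ 1` and `1 ≤ l ≤ k`:
`U^l_{2k} ≤ e^{2k} (2k)! C(2k−l−1, l−1)`, with `C(2k−l−1, l−1) ≤ C(2k,k) ≤ 2^{2k}/√k`,
so that `U^l_{2k} ≤ (1/√k) (2e)^{2k} (2k)!`. -/
theorem stmt19 (k l : ℕ) (hk : 1 ≤ k) (hl1 : 1 ≤ l) (hlk : l ≤ k) :
    Ulk k l ≤ Real.exp 1 ^ (2 * k) * ((2 * k).factorial : ℝ) *
        (Nat.choose (2 * k - l - 1) (l - 1) : ℝ) ∧
    Nat.choose (2 * k - l - 1) (l - 1) ≤ Nat.choose (2 * k) k ∧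
    ((Nat.choose (2 * k) k : ℕ) : ℝ) ≤ 2 ^ (2 * k) / Real.sqrt k ∧
    Ulk k l ≤ (1 / Real.sqrt k) * (2 * Real.exp 1) ^ (2 * k) * ((2 * k).factorial : ℝ) := by
  classical
  set S := (Finset.Nat.antidiagonalTuple l (2 * k)).filter (fun a => ∀ ν, 2 ≤ a ν) with hS
  set B : ℝ := Real.exp 1 ^ (2 * k) * ((2 * k).factorial : ℝ) with hB
  have hBnn : 0 ≤ B := by positivity
  -- pointwise term bound
  have hterm : ∀ a ∈ S,
      (((2 * k).factorial : ℝ) / ∏ ν, ((a ν).factorial : ℝ)) * ∏ ν, (a ν : ℝ) ^ (a ν) ≤ B := by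
    intro a ha
    simp only [hS, Finset.mem_filter, Finset.Nat.mem_antidiagonalTuple] at ha
    have hP : (0 : ℝ) < ∏ ν, ((a ν).factorial : ℝ) := by positivity
    have hprod : ∏ ν, (a ν : ℝ) ^ (a ν)
        ≤ Real.exp 1 ^ (2 * k) * ∏ ν, ((a ν).factorial : ℝ) := by
      calc ∏ ν, (a ν : ℝ) ^ (a ν)
          ≤ ∏ ν, (Real.exp 1 ^ (a ν) * ((a ν).factorial : ℝ)) := by
            refine Finset.prod_le_prod (fun ν _ => by positivity)
              (fun ν _ => aux_pow_le_exp_mul_factorial (a ν))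
        _ = (∏ ν, Real.exp 1 ^ (a ν)) * ∏ ν, ((a ν).factorial : ℝ) :=
            Finset.prod_mul_distrib
        _ = Real.exp 1 ^ (2 * k) * ∏ ν, ((a ν).factorial : ℝ) := by
            rw [Finset.prod_pow_eq_pow_sum, ha.1]
    calc (((2 * k).factorial : ℝ) / ∏ ν, ((a ν).factorial : ℝ)) * ∏ ν, (a ν : ℝ) ^ (a ν)
        ≤ (((2 * k).factorial : ℝ) / ∏ ν, ((a ν).factorial : ℝ))
            * (Real.exp 1 ^ (2 * k) * ∏ ν, ((a ν).factorial : ℝ)) := by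
          exact mul_le_mul_of_nonneg_left hprod (by positivity)
      _ = B := by rw [hB]; field_simp
  -- first conjunct
  have h1 : Ulk k l ≤ B * (Nat.choose (2 * k - l - 1) (l - 1) : ℝ) := by
    calc Ulk k l ≤ ∑ _a ∈ S, B := Finset.sum_le_sum hterm
      _ = (S.card : ℝ) * B := by rw [Finset.sum_const, nsmul_eq_mul]
      _ ≤ (Nat.choose (2 * k - l - 1) (l - 1) : ℝ) * B := by
          refine mul_le_mul_of_nonneg_right ?_ hBnn
          exact_mod_cast aux_card_le k l hl1 hlk
      _ = B * (Nat.choose (2 * k - l - 1) (l - 1) : ℝ) := mul_comm _ _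
  -- second conjunct
  have h2 : Nat.choose (2 * k - l - 1) (l - 1) ≤ Nat.choose (2 * k) k := by
    calc Nat.choose (2 * k - l - 1) (l - 1) ≤ Nat.choose (2 * k) (l - 1) :=
          Nat.choose_le_choose _ (by omega)
      _ ≤ Nat.choose (2 * k) k := by
          have := Nat.choose_le_middle (l - 1) (2 * k)
          simpa [Nat.mul_div_cancel_left k two_pos] using this
  -- third conjunct
  have hksqrt : (0 : ℝ) < Real.sqrt k := Real.sqrt_pos.mpr (by exact_mod_cast hk)
  have h3 : ((Nat.choose (2 * k) k : ℕ) : ℝ) ≤ 2 ^ (2 * k) / Real.sqrt k := by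
    rw [le_div_iff₀ hksqrt]
    set c : ℝ := ((Nat.choose (2 * k) k : ℕ) : ℝ) with hc
    have hcnn : 0 ≤ c := by positivity
    have hsq : (c * Real.sqrt k) ^ 2 ≤ ((2 : ℝ) ^ (2 * k)) ^ 2 := by
      have hnat : Nat.choose (2 * k) k ^ 2 * (3 * k + 1) ≤ 16 ^ k := by
        have := aux_centralBinom_sq k
        rwa [Nat.centralBinom_eq_two_mul_choose] at this
      have hnat' : Nat.choose (2 * k) k ^ 2 * k ≤ 16 ^ k :=
        le_trans (Nat.mul_le_mul_left _ (by omega)) hnat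
      have hr : c ^ 2 * (k : ℝ) ≤ (16 : ℝ) ^ k := by rw [hc]; exact_mod_cast hnat'
      calc (c * Real.sqrt k) ^ 2 = c ^ 2 * Real.sqrt k ^ 2 := mul_pow _ _ _
        _ = c ^ 2 * (k : ℝ) := by rw [Real.sq_sqrt (by positivity)]
        _ ≤ (16 : ℝ) ^ k := hr
        _ = ((2 : ℝ) ^ (2 * k)) ^ 2 := by
            rw [← pow_mul]
            norm_num
            rw [show 2 * k * 2 = 4 * k by ring, pow_mul]
            norm_num
    calc c * Real.sqrt k = Real.sqrt ((c * Real.sqrt k) ^ 2) :=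
          (Real.sqrt_sq (by positivity)).symm
      _ ≤ Real.sqrt (((2 : ℝ) ^ (2 * k)) ^ 2) := Real.sqrt_le_sqrt hsq
      _ = (2 : ℝ) ^ (2 * k) := Real.sqrt_sq (by positivity)
  -- fourth conjunct
  refine ⟨h1, h2, h3, ?_⟩
  calc Ulk k l ≤ B * (Nat.choose (2 * k - l - 1) (l - 1) : ℝ) := h1
    _ ≤ B * (Nat.choose (2 * k) k : ℝ) := by
        refine mul_le_mul_of_nonneg_left (by exact_mod_cast h2) hBnn
    _ ≤ B * (2 ^ (2 * k) / Real.sqrt k) := mul_le_mul_of_nonneg_left h3 hBnn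
    _ = (1 / Real.sqrt k) * (2 * Real.exp 1) ^ (2 * k) * ((2 * k).factorial : ℝ) := by
        rw [hB, mul_pow]
        field_simp
end
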